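/- The number of prepictures between PQ and R equals the sum over all preopen sets O of R of the product of the number of prepictures between P and R restricted to the complement of O, and the number of prepictures between Q and R restricted to O. (Hopf pairing compatibility: ⟨PQ, R⟩_< = ⟨P⊗Q, Δ_<(R)⟩_<.) -/

import Mathlib

def strictOf {α : Type*} (r : α → α → Prop) (i j : α) : Prop := r i j ∧ ¬ r j i

def IsPrepicture {α β : Type*} (p1 p2 : α → α → Prop) (q1 q2 : β → β → Prop) (f : α ≃ β) : Prop :=
  (∀ i j, strictOf p1 i j → strictOf q2 (f i) (f j)) ∧
  (∀ i j, strictOf q1 (f i) (f j) → strictOf p2 i j)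

def joinLe1 {α β : Type*} (p : α → α → Prop) (q : β → β → Prop) : α ⊕ β → α ⊕ β → Prop
  | Sum.inl a, Sum.inl b => p a b
  | Sum.inr a, Sum.inr b => q a b
  | _, _ => False

def joinLe2 {α β : Type*} (p : α → α → Prop) (q : β → β → Prop) : α ⊕ β → α ⊕ β → Prop
  | Sum.inl a, Sum.inl b => p a b
  | Sum.inr a, Sum.inr b => q a b
  | Sum.inl _, Sum.inr _ => True
  | Sum.inr _, Sum.inl _ => False

def IsPreopenSet {α : Type*} (r : α → α → Prop) (O : Set α) : Prop :=
  ∀ i j, strictOf r i j → i ∈ O → j ∈ O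

open Classical

private lemma nat_card_sigma {ι : Type*} [Fintype ι] (f : ι → Type*) [∀ i, Finite (f i)] :
    Nat.card (Σ i, f i) = ∑ i, Nat.card (f i) := by
  have : ∀ i, Fintype (f i) := fun i => Fintype.ofFinite _
  simp [Nat.card_eq_fintype_card]

/-- glue two equivalences into subtypes along a decidable set -/
private def glueEquiv {α β γ : Type*} (O : Finset γ) [DecidableEq γ]
    (g : α ≃ {x : γ // x ∉ O}) (h : β ≃ {x : γ // x ∈ O}) : α ⊕ β ≃ γ where
  toFun := Sum.elim (fun a => (g a).1) (fun b => (h b).1)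
  invFun c := if hc : c ∈ O then Sum.inr (h.symm ⟨c, hc⟩) else Sum.inl (g.symm ⟨c, hc⟩)
  left_inv x := by
    rcases x with a | b
    · simp only [Sum.elim_inl]
      refine (dif_neg (g a).2).trans ?_
      simp
    · simp only [Sum.elim_inr]
      refine (dif_pos (h b).2).trans ?_
      simp
  right_inv c := by
    dsimp only
    by_cases hc : c ∈ O
    · rw [dif_pos hc]; simp
    · rw [dif_neg hc]; simp

/-- `⟨PQ, R⟩_< = ⟨P ⊗ Q, Δ_<(R)⟩_<`: the number of prepictures between `PQ` and `R`
is the sum, over preopen sets `O` of `R`, of the number of prepictures between `P`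
and `R|_{Oᶜ}` times the number of prepictures between `Q` and `R|_O`. -/
theorem stmt9 {α β γ : Type*} [Fintype α] [Fintype β] [Fintype γ]
    (p1 p2 : α → α → Prop) (q1 q2 : β → β → Prop) (r1 r2 : γ → γ → Prop) :
    Nat.card {f : α ⊕ β ≃ γ // IsPrepicture (joinLe1 p1 q1) (joinLe2 p2 q2) r1 r2 f}
      = ∑ O : Finset γ,
          if IsPreopenSet r1 (↑O : Set γ) then
            Nat.card {g : α ≃ {x : γ // x ∉ O} //
                IsPrepicture p1 p2 (fun x y => r1 x.1 y.1) (fun x y => r2 x.1 y.1) g}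
            * Nat.card {h : β ≃ {x : γ // x ∈ O} //
                IsPrepicture q1 q2 (fun x y => r1 x.1 y.1) (fun x y => r2 x.1 y.1) h}
          else 0 := by
  classical
  set T := {f : α ⊕ β ≃ γ // IsPrepicture (joinLe1 p1 q1) (joinLe2 p2 q2) r1 r2 f} with hT
  let key : T → Finset γ := fun t => Finset.image (fun b => t.1 (Sum.inr b)) Finset.univ
  have h1 : Nat.card T = ∑ O : Finset γ, Nat.card {t : T // key t = O} := by
    rw [Nat.card_congr (Equiv.sigmaFiberEquiv key).symm, nat_card_sigma]
  rw [h1]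
  refine Finset.sum_congr rfl fun O _ => ?_
  -- Basic facts about elements of the fiber
  have memO : ∀ (t : T), key t = O → ∀ c : γ, c ∈ O ↔ ∃ b, t.1 (Sum.inr b) = c := by
    intro t ht c
    rw [← ht]
    simp [key]
  have hrO : ∀ (t : T), key t = O → ∀ b, t.1 (Sum.inr b) ∈ O := by
    intro t ht b; exact (memO t ht _).2 ⟨b, rfl⟩
  have hlO : ∀ (t : T), key t = O → ∀ a, t.1 (Sum.inl a) ∉ O := by
    intro t ht a hmem
    obtain ⟨b, hb⟩ := (memO t ht _).1 hmem
    exact absurd (t.1.injective hb) (by simp)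
  have hpre : ∀ (t : T), key t = O → IsPreopenSet r1 (↑O : Set γ) := by
    intro t ht i j hij hi
    obtain ⟨b, hb⟩ := (memO t ht i).1 hi
    obtain ⟨x, hx⟩ := t.1.surjective j
    subst hb; subst hx
    have h2 := t.2.2 _ _ hij
    match x, h2 with
    | Sum.inr b', _ => exact hrO t ht b'
    | Sum.inl a, h2 => exact absurd h2.1 (by simp [joinLe2])
  by_cases hO : IsPreopenSet r1 (↑O : Set γ)
  · rw [if_pos hO, ← Nat.card_prod]
    set G := {g : α ≃ {x : γ // x ∉ O} //
        IsPrepicture p1 p2 (fun x y => r1 x.1 y.1) (fun x y => r2 x.1 y.1) g} with hG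
    set H := {h : β ≃ {x : γ // x ∈ O} //
        IsPrepicture q1 q2 (fun x y => r1 x.1 y.1) (fun x y => r2 x.1 y.1) h} with hH
    -- The map from pairs to the fiber
    have Ψprop : ∀ (gh : G × H),
        IsPrepicture (joinLe1 p1 q1) (joinLe2 p2 q2) r1 r2 (glueEquiv O gh.1.1 gh.2.1) ∧
        Finset.image (fun b => glueEquiv O gh.1.1 gh.2.1 (Sum.inr b)) Finset.univ = O := by
      rintro ⟨⟨g, hg⟩, ⟨h, hh⟩⟩
      refine ⟨⟨?_, ?_⟩, ?_⟩
      · rintro (a | a) (b | b) hab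
        · exact hg.1 a b hab
        · exact absurd hab.1 (by simp [joinLe1])
        · exact absurd hab.1 (by simp [joinLe1])
        · exact hh.1 a b hab
      · rintro (a | a) (b | b) hab
        · exact hg.2 a b hab
        · exact ⟨trivial, fun hcon => hcon⟩
        · exact absurd (hO _ _ hab (h a).2) ((g b).2)
        · exact hh.2 a b hab
      · ext c
        simp only [Finset.mem_image, Finset.mem_univ, true_and]
        constructor
        · rintro ⟨b, hb⟩
          exact hb ▸ (h b).2
        · intro hc
          exact ⟨h.symm ⟨c, hc⟩, by simp [glueEquiv]⟩
    let Ψ : G × H → {t : T // key t = O} := fun gh =>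
      ⟨⟨glueEquiv O gh.1.1 gh.2.1, (Ψprop gh).1⟩, (Ψprop gh).2⟩
    refine Nat.card_congr (Equiv.ofBijective Ψ ⟨?_, ?_⟩).symm
    · -- injective
      rintro ⟨⟨g, hg⟩, ⟨h, hh⟩⟩ ⟨⟨g', hg'⟩, ⟨h', hh'⟩⟩ heq
      have hfun : ∀ x : α ⊕ β, glueEquiv O g h x = glueEquiv O g' h' x := by
        intro x
        exact congrArg (fun t : {t : T // key t = O} => (t.1.1 : α ⊕ β ≃ γ) x) heq
      refine Prod.ext (Subtype.ext (Equiv.ext fun a => Subtype.ext ?_))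
        (Subtype.ext (Equiv.ext fun b => Subtype.ext ?_))
      · exact hfun (Sum.inl a)
      · exact hfun (Sum.inr b)
    · -- surjective
      rintro ⟨t, ht⟩
      have gbij : Function.Bijective
          (fun a : α => (⟨t.1 (Sum.inl a), hlO t ht a⟩ : {x : γ // x ∉ O})) := by
        constructor
        · intro a a' haa'
          have := t.1.injective (congrArg Subtype.val haa')
          exact Sum.inl.inj this
        · rintro ⟨x, hx⟩
          obtain ⟨s, hs⟩ := t.1.surjective x
          match s, hs with
          | Sum.inl a, hs => exact ⟨a, Subtype.ext hs⟩
          | Sum.inr b, hs => exact absurd (hs ▸ hrO t ht b) hx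
      have hbij : Function.Bijective
          (fun b : β => (⟨t.1 (Sum.inr b), hrO t ht b⟩ : {x : γ // x ∈ O})) := by
        constructor
        · intro b b' hbb'
          have := t.1.injective (congrArg Subtype.val hbb')
          exact Sum.inr.inj this
        · rintro ⟨x, hx⟩
          obtain ⟨s, hs⟩ := t.1.surjective x
          match s, hs with
          | Sum.inr b, hs => exact ⟨b, Subtype.ext hs⟩
          | Sum.inl a, hs => exact absurd (hs ▸ hx) (hlO t ht a)
      refine ⟨⟨⟨Equiv.ofBijective _ gbij, ?_, ?_⟩, ⟨Equiv.ofBijective _ hbij, ?_, ?_⟩⟩, ?_⟩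
      · intro i j hij
        exact t.2.1 (Sum.inl i) (Sum.inl j) hij
      · intro i j hij
        exact t.2.2 (Sum.inl i) (Sum.inl j) hij
      · intro i j hij
        exact t.2.1 (Sum.inr i) (Sum.inr j) hij
      · intro i j hij
        exact t.2.2 (Sum.inr i) (Sum.inr j) hij
      · refine Subtype.ext (Subtype.ext (Equiv.ext fun x => ?_))
        cases x <;> rfl
  · rw [if_neg hO]
    have : IsEmpty {t : T // key t = O} := ⟨fun t => hO (hpre t.1 t.2)⟩
    simp
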